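/- Let k be a perfect field of characteristic p, E irreducible of height h and degree d with root f ∈ k[[t]], E_y(t,f) ≠ 0. If P ∈ k[t,y] satisfies deg_t P ≤ h and deg_y P ≤ d-2, then for every 0 ≤ r < p, Λ_{r,p-1}(P·E^{p-1}) has y-degree at most d-2; i.e., the subspace { Q(t,f)/E_y(t,f) : deg_t Q < h, deg_y Q ≤ d-2 } is stable under all section operators Λ_r. -/

import Mathlib

noncomputable section

/-- The canonical map `k[t] →+* k⟦t⟧`. -/
def polyToSeries (k : Type*) [Field k] : Polynomial k →+* PowerSeries k :=
  Polynomial.eval₂RingHom (PowerSeries.C (R := k)) PowerSeries.X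

/-- The canonical map `k[t] →+* k((t))`. -/
def polyToLaurent (k : Type*) [Field k] : Polynomial k →+* LaurentSeries k :=
  (HahnSeries.ofPowerSeries ℤ k).comp (polyToSeries k)

/-- `t` inside `k((t))`. -/
def tL (k : Type*) [Field k] : LaurentSeries k := HahnSeries.single (1 : ℤ) (1 : k)

/-- Evaluation of `P ∈ k[t][y]` at `y = f` inside `k((t))`. -/
def evalAt (k : Type*) [Field k] (f : PowerSeries k) (P : Polynomial (Polynomial k)) :
    LaurentSeries k :=
  Polynomial.eval₂ (polyToLaurent k) (HahnSeries.ofPowerSeries ℤ k f) P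

open Polynomial

namespace StabilityAux

/-! ### Generic polynomials built from coefficient functions -/

variable {R : Type*} [CommRing R]

/-- The polynomial `∑_{m < N} g m • X^m`. -/
def mkPoly (g : ℕ → R) (N : ℕ) : R[X] :=
  ∑ m ∈ Finset.range N, C (g m) * X ^ m

theorem coeff_mkPoly (g : ℕ → R) (N : ℕ) (i : ℕ) :
    (mkPoly g N).coeff i = if i < N then g i else 0 := by
  unfold mkPoly
  rw [finset_sum_coeff]
  simp only [coeff_C_mul, coeff_X_pow, mul_ite, mul_one, mul_zero]
  rw [Finset.sum_ite_eq (Finset.range N) i g]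
  simp [Finset.mem_range]

/-- The `s`-th digit of a polynomial in base `X^p`:
`pdigit p s A = ∑_m A.coeff (p*m+s) • X^m`. -/
def pdigit (p s : ℕ) (A : R[X]) : R[X] :=
  mkPoly (fun m => A.coeff (p * m + s)) (A.natDegree + 1)

theorem coeff_pdigit {p : ℕ} (hp : 0 < p) (s : ℕ) (A : R[X]) (m : ℕ) :
    (pdigit p s A).coeff m = A.coeff (p * m + s) := by
  rw [pdigit, coeff_mkPoly]
  by_cases hm : m < A.natDegree + 1
  · rw [if_pos hm]
  · rw [if_neg hm]
    symm
    apply coeff_eq_zero_of_natDegree_lt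
    have h1 : m ≤ p * m := Nat.le_mul_of_pos_left m hp
    omega

theorem pdigit_add {p : ℕ} (hp : 0 < p) (s : ℕ) (A B : R[X]) :
    pdigit p s (A + B) = pdigit p s A + pdigit p s B := by
  ext m
  simp [coeff_pdigit hp]

theorem pdigit_sub {p : ℕ} (hp : 0 < p) (s : ℕ) (A B : R[X]) :
    pdigit p s (A - B) = pdigit p s A - pdigit p s B := by
  ext m
  simp [coeff_pdigit hp]

theorem pdigit_C_mul {p : ℕ} (hp : 0 < p) (s : ℕ) (a : R) (A : R[X]) :
    pdigit p s (C a * A) = C a * pdigit p s A := by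
  ext m
  simp [coeff_pdigit hp]

theorem pdigit_Xp_mul {p s : ℕ} (hp : 0 < p) (hs : s < p) (A : R[X]) :
    pdigit p s (X ^ p * A) = X * pdigit p s A := by
  ext m
  rw [coeff_pdigit hp, mul_comm (X ^ p) A, coeff_mul_X_pow']
  cases m with
  | zero =>
    rw [if_neg (by simpa using (by omega : ¬ p ≤ p * 0 + s)), mul_coeff_zero]
    simp
  | succ m =>
    have hple : p * 1 ≤ p * (m + 1) := Nat.mul_le_mul_left p (by omega)
    have hms : p * (m + 1) + s = p * m + s + p := by ring
    rw [if_pos (by omega), coeff_X_mul, coeff_pdigit hp]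
    congr 1
    omega

theorem pdigit_of_natDegree_lt {p s : ℕ} (hp : 0 < p) (hs : s < p) {A : R[X]}
    (hA : A.natDegree < p) : pdigit p s A = C (A.coeff s) := by
  ext m
  rw [coeff_pdigit hp, coeff_C]
  cases m with
  | zero => simp
  | succ m =>
    rw [if_neg (by omega)]
    apply coeff_eq_zero_of_natDegree_lt
    have : p * 1 ≤ p * (m+1) := Nat.mul_le_mul_left p (by omega)
    omega

theorem pdigit_map {R S : Type*} [CommRing R] [CommRing S] (f : R →+* S)
    {p : ℕ} (hp : 0 < p) (s : ℕ) (A : R[X]) :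
    pdigit p s (A.map f) = (pdigit p s A).map f := by
  ext m
  rw [coeff_pdigit hp, coeff_map, coeff_map, coeff_pdigit hp]

/-- Base-`p` digit reconstruction. -/
theorem pdigit_reconstruct {p : ℕ} (hp : 0 < p) (c : R[X]) :
    ∑ r ∈ Finset.range p, X ^ r * Polynomial.expand R p (pdigit p r c) = c := by
  ext n
  rw [finset_sum_coeff]
  have hdm := Nat.div_add_mod n p
  have hmlt : n % p < p := Nat.mod_lt n hp
  rw [Finset.sum_eq_single (n % p)]
  · rw [mul_comm, coeff_mul_X_pow', if_pos (Nat.mod_le n p),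
      Polynomial.coeff_expand hp,
      if_pos (show p ∣ n - n % p from ⟨n / p, by omega⟩),
      coeff_pdigit hp,
      show n - n % p = p * (n / p) from by omega,
      Nat.mul_div_cancel_left _ hp]
    congr 1 <;> omega
  · intro b hb hbne
    rw [mul_comm, coeff_mul_X_pow']
    simp only [Finset.mem_range] at hb
    by_cases hbn : b ≤ n
    · rw [if_pos hbn, Polynomial.coeff_expand hp]
      rw [if_neg]
      rintro ⟨q, hq⟩
      apply hbne
      have : n % p = b := by
        rw [show n = p * q + b from by omega, Nat.mul_add_mod, Nat.mod_eq_of_lt hb]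
      omega
    · rw [if_neg hbn]
  · intro hn
    exact absurd (Finset.mem_range.mpr hmlt) hn

end StabilityAux

namespace StabilityAux

section RootDigit

variable (k : Type*) [Field k] (p : ℕ) [Fact p.Prime] [CharP k p] [PerfectRing k p]

/-- `p`-th root of the `s`-th base-`p` digit of a polynomial over a perfect field. -/
def rootDigit (s : ℕ) (c : Polynomial k) : Polynomial k :=
  (pdigit p s c).map ((frobeniusEquiv k p).symm : k →+* k)

theorem rootDigit_pow (s : ℕ) (c : Polynomial k) :
    (rootDigit k p s c) ^ p = Polynomial.expand k p (pdigit p s c) := by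
  have hfrob : (frobenius k p).comp ((frobeniusEquiv k p).symm : k →+* k) = RingHom.id k := by
    ext a
    exact frobenius_apply_frobeniusEquiv_symm k p a
  calc (rootDigit k p s c) ^ p
      = Polynomial.map (frobenius k p) (Polynomial.expand k p (rootDigit k p s c)) :=
        (Polynomial.map_frobenius_expand p _).symm
    _ = Polynomial.expand k p (Polynomial.map (frobenius k p) (rootDigit k p s c)) :=
        Polynomial.map_expand
    _ = Polynomial.expand k p (pdigit p s c) := by
        rw [rootDigit, Polynomial.map_map, hfrob, Polynomial.map_id]

theorem rootDigit_reconstruct (c : Polynomial k) :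
    ∑ r ∈ Finset.range p, Polynomial.X ^ r * (rootDigit k p r c) ^ p = c := by
  have hp : 0 < p := (Fact.out : p.Prime).pos
  calc ∑ r ∈ Finset.range p, Polynomial.X ^ r * (rootDigit k p r c) ^ p
      = ∑ r ∈ Finset.range p, Polynomial.X ^ r * Polynomial.expand k p (pdigit p r c) := by
        refine Finset.sum_congr rfl fun r _ => ?_
        rw [rootDigit_pow]
    _ = c := pdigit_reconstruct hp c

end RootDigit

section Uniqueness

variable {k : Type*} [Field k] {p : ℕ} [Fact p.Prime]

theorem tL_pow (r : ℕ) : (tL k) ^ r = HahnSeries.single (r : ℤ) (1 : k) := by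
  rw [tL, HahnSeries.single_pow]
  norm_num

/-- Uniqueness of the Frobenius-digit decomposition in `k((t))`. -/
theorem lambda_unique (a : Fin p → LaurentSeries k)
    (hz : ∑ j : Fin p, (tL k) ^ (j : ℕ) * a j ^ p = 0) (r : Fin p) : a r = 0 := by
  classical
  have hp : 0 < p := (Fact.out : p.Prime).pos
  by_contra hne
  -- the set of indices with nonzero entry
  set S : Finset (Fin p) := Finset.univ.filter (fun j => a j ≠ 0) with hS
  have hrS : r ∈ S := Finset.mem_filter.mpr ⟨Finset.mem_univ r, hne⟩
  -- each nonzero term has order `j + p * order (a j)`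
  set F : Fin p → LaurentSeries k := fun j => (tL k) ^ (j : ℕ) * a j ^ p with hF
  have horder : ∀ j ∈ S, (F j).order = (j : ℤ) + p * (a j).order := by
    intro j hj
    have haj : a j ≠ 0 := by simpa [hS] using hj
    have h1 : (tL k) ^ (j : ℕ) ≠ 0 := by
      rw [tL_pow]; exact HahnSeries.single_ne_zero one_ne_zero
    have h2 : a j ^ p ≠ 0 := pow_ne_zero _ haj
    rw [hF]
    simp only
    rw [HahnSeries.order_mul h1 h2, tL_pow, HahnSeries.order_single one_ne_zero,
      HahnSeries.order_pow]
    simp [nsmul_eq_mul]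
  have hFne : ∀ j ∈ S, F j ≠ 0 := by
    intro j hj
    have haj : a j ≠ 0 := by simpa [hS] using hj
    have h1 : (tL k) ^ (j : ℕ) ≠ 0 := by
      rw [tL_pow]; exact HahnSeries.single_ne_zero one_ne_zero
    exact mul_ne_zero h1 (pow_ne_zero _ haj)
  have hinj : ∀ j ∈ S, ∀ j' ∈ S, (F j).order = (F j').order → j = j' := by
    intro j hj j' hj' he
    rw [horder j hj, horder j' hj'] at he
    have hdvd : (p : ℤ) ∣ ((j : ℤ) - (j' : ℤ)) := ⟨(a j').order - (a j).order, by linarith⟩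
    have habs : |(j : ℤ) - (j' : ℤ)| < (p : ℤ) := by
      have := j.isLt
      have := j'.isLt
      rw [abs_lt]
      omega
    have := Int.eq_zero_of_abs_lt_dvd hdvd habs
    have : (j : ℤ) = (j' : ℤ) := by omega
    exact Fin.ext (by exact_mod_cast this)
  -- pick the index of minimal order
  obtain ⟨j₀, hj₀S, hj₀min⟩ := S.exists_min_image (fun j => (F j).order) ⟨r, hrS⟩
  -- evaluate coefficients at that order
  have hcoeff : (Finset.univ.sum F).coeff ((F j₀).order) = 0 := by rw [hz]; rfl
  have hsum : (Finset.univ.sum F).coeff ((F j₀).order)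
      = ∑ j : Fin p, (F j).coeff ((F j₀).order) := by
    let φ : LaurentSeries k →+ k :=
      { toFun := fun x => x.coeff ((F j₀).order)
        map_zero' := rfl
        map_add' := fun x y => HahnSeries.coeff_add }
    exact map_sum φ F Finset.univ
  have hterm : ∀ j : Fin p, j ≠ j₀ → (F j).coeff ((F j₀).order) = 0 := by
    intro j hj
    by_cases hjS : j ∈ S
    · apply HahnSeries.coeff_eq_zero_of_lt_order
      have hle := hj₀min j hjS
      have hne2 : (F j).order ≠ (F j₀).order := fun h => hj (hinj j hjS j₀ hj₀S h)
      omega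
    · have : a j = 0 := by
        by_contra hcon
        exact hjS (Finset.mem_filter.mpr ⟨Finset.mem_univ j, hcon⟩)
      simp [hF, this, zero_pow hp.ne']
  have hmain : (F j₀).coeff ((F j₀).order) ≠ 0 :=
    HahnSeries.coeff_order_eq_zero.not.mpr (hFne j₀ hj₀S)
  rw [hsum, Finset.sum_eq_single j₀ (fun j _ hj => hterm j hj)
    (fun h => absurd (Finset.mem_univ j₀) h)] at hcoeff
  exact hmain hcoeff

end Uniqueness

end StabilityAux

namespace StabilityAux

section Key

variable {K : Type*} [Field K] {p : ℕ} [Fact p.Prime] [CharP K p]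

/-- **Key identity**: if `E(α) = 0` then the `(p-1)`-st base-`p` digit of
`Q·E^{p-1}`, evaluated at `α^p`, equals `Q(α)·E'(α)^{p-1}`. -/
theorem key_digit_eval (Ebar Qbar : Polynomial K) (α : K) (hroot : Ebar.eval α = 0) :
    (pdigit p (p - 1) (Qbar * Ebar ^ (p - 1))).eval (α ^ p)
      = Qbar.eval α * ((derivative Ebar).eval α) ^ (p - 1) := by
  haveI : CharP (Polynomial K) p := charP_of_injective_ringHom (C_injective (R := K)) p
  have hp : 0 < p := (Fact.out : p.Prime).pos
  have hp1 : p - 1 < p := by omega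
  set u := Ebar /ₘ (X - C α) with hu
  have hfac : (X - C α) * u = Ebar := mul_divByMonic_eq_iff_isRoot.mpr hroot
  have hueval : u.eval α = (derivative Ebar).eval α := by
    have h1 := congrArg derivative hfac
    rw [derivative_mul, derivative_sub, derivative_X, derivative_C, sub_zero, one_mul] at h1
    have h2 := congrArg (eval α) h1
    simp only [eval_add, eval_mul, eval_sub, eval_X, eval_C, sub_self, zero_mul, add_zero] at h2
    exact h2
  set A := Qbar * u ^ (p - 1) with hA
  set c := A.eval α with hc
  set W := A /ₘ (X - C α) with hW
  have hAdec : A = (X - C α) * W + C c := by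
    have h1 := modByMonic_add_div A (X - C α)
    rw [modByMonic_X_sub_C_eq_C_eval] at h1
    rw [← h1, hc]
    ring
  have hXp : (X - C α) ^ p = X ^ p - C (α ^ p) := by
    rw [sub_pow_char, ← C_pow]
  have hps : p - 1 + 1 = p := by omega
  have hG : Qbar * Ebar ^ (p - 1)
      = (X ^ p * W - C (α ^ p) * W) + C c * (X - C α) ^ (p - 1) := by
    calc Qbar * Ebar ^ (p - 1) = A * (X - C α) ^ (p - 1) := by rw [hA, ← hfac, mul_pow]; ring
      _ = ((X - C α) * W + C c) * (X - C α) ^ (p - 1) := by rw [← hAdec]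
      _ = (X - C α) ^ (p - 1 + 1) * W + C c * (X - C α) ^ (p - 1) := by ring
      _ = _ := by rw [hps, hXp]; ring
  have hS : pdigit p (p - 1) ((X - C α) ^ (p - 1)) = C 1 := by
    have hmono : ((X - C α) ^ (p - 1)).Monic := (monic_X_sub_C α).pow _
    have hnd : ((X - C α) ^ (p - 1)).natDegree = p - 1 := by
      rw [natDegree_pow, natDegree_X_sub_C, mul_one]
    rw [pdigit_of_natDegree_lt hp hp1 (by omega : ((X - C α) ^ (p - 1)).natDegree < p)]
    congr 1
    have := hmono.coeff_natDegree
    rwa [hnd] at this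
  have hdig : pdigit p (p - 1) (Qbar * Ebar ^ (p - 1))
      = (X * pdigit p (p - 1) W - C (α ^ p) * pdigit p (p - 1) W) + C c := by
    rw [hG, pdigit_add hp, pdigit_sub hp, pdigit_Xp_mul hp hp1, pdigit_C_mul hp,
      pdigit_C_mul hp, hS, C_1, mul_one]
  rw [hdig]
  simp only [eval_add, eval_sub, eval_mul, eval_X, eval_C, sub_self, zero_mul]
  rw [hc, hA]
  simp [hueval]

end Key

end StabilityAux

namespace StabilityAux

section DegreeBounds

variable {k : Type*} [Field k]

theorem wb_add_lt {x y : WithBot ℕ} {a b : ℕ} (hx : x < (a : WithBot ℕ))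
    (hy : y ≤ (b : WithBot ℕ)) : x + y < ((a + b : ℕ) : WithBot ℕ) := by
  simp only [Nat.cast_withBot] at hx hy ⊢
  cases x using WithBot.recBotCoe with
  | bot => rw [WithBot.bot_add]; exact WithBot.bot_lt_coe (a + b)
  | coe x =>
    cases y using WithBot.recBotCoe with
    | bot => rw [WithBot.add_bot]; exact WithBot.bot_lt_coe (a + b)
    | coe y =>
      have hx' : x < a := WithBot.coe_lt_coe.mp hx
      have hy' : y ≤ b := WithBot.coe_le_coe.mp hy
      rw [← WithBot.coe_add]
      exact WithBot.coe_lt_coe.mpr (by omega)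

theorem coeff_mul_degree_le {A B : Polynomial (Polynomial k)} {a b : ℕ}
    (hA : ∀ i, (A.coeff i).degree ≤ (a : WithBot ℕ))
    (hB : ∀ i, (B.coeff i).degree ≤ (b : WithBot ℕ)) (n : ℕ) :
    ((A * B).coeff n).degree ≤ ((a + b : ℕ) : WithBot ℕ) := by
  rw [Polynomial.coeff_mul]
  refine le_trans (Polynomial.degree_sum_le _ _) (Finset.sup_le fun x _ => ?_)
  rw [Polynomial.degree_mul]
  refine le_trans (add_le_add (hA x.1) (hB x.2)) ?_
  rw [Nat.cast_add]

theorem coeff_pow_degree_le {A : Polynomial (Polynomial k)} {a : ℕ}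
    (hA : ∀ i, (A.coeff i).degree ≤ (a : WithBot ℕ)) (n : ℕ) :
    ∀ i, ((A ^ n).coeff i).degree ≤ ((n * a : ℕ) : WithBot ℕ) := by
  induction n with
  | zero =>
    intro i
    rw [pow_zero]
    rcases Nat.eq_zero_or_pos i with rfl | hi
    · simp
    · rw [Polynomial.coeff_one, if_neg (by omega)]
      simp
  | succ n ih =>
    intro i
    have h1 := coeff_mul_degree_le ih hA (A := A ^ n) (B := A) i
    have h2 : (n * a + a : ℕ) = ((n + 1) * a : ℕ) := by ring
    rw [pow_succ]
    rwa [h2] at h1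

theorem coeff_mul_degree_lt {A B : Polynomial (Polynomial k)} {a b : ℕ}
    (hA : ∀ i, (A.coeff i).degree < (a : WithBot ℕ))
    (hB : ∀ i, (B.coeff i).degree ≤ (b : WithBot ℕ)) (n : ℕ) :
    ((A * B).coeff n).degree < ((a + b : ℕ) : WithBot ℕ) := by
  rw [Polynomial.coeff_mul]
  have hbot : (⊥ : WithBot ℕ) < ((a + b : ℕ) : WithBot ℕ) := by
    simp only [Nat.cast_withBot]
    exact WithBot.bot_lt_coe (a + b)
  refine lt_of_le_of_lt (Polynomial.degree_sum_le _ _) ((Finset.sup_lt_iff hbot).mpr ?_)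
  intro x _
  rw [Polynomial.degree_mul]
  exact wb_add_lt (hA x.1) (hB x.2)

end DegreeBounds

end StabilityAux

namespace StabilityAux

section RootDigitZero
variable (k : Type*) [Field k] (p : ℕ) [Fact p.Prime] [CharP k p] [PerfectRing k p]

theorem rootDigit_zero (s : ℕ) : rootDigit k p s 0 = 0 := by
  rw [rootDigit]
  have : pdigit p s (0 : Polynomial k) = 0 := by
    simp [pdigit, mkPoly]
  rw [this, Polynomial.map_zero]

end RootDigitZero

end StabilityAux


open StabilityAux

/-- Let `k` be perfect of characteristic `p`, `E` irreducible
over `k(t)` of height `h` and degree `d`, with root `f ∈ k⟦t⟧` and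
`E_y(t,f) ≠ 0`.  The subspace `{ Q(t,f)/E_y(t,f) : deg_t Q < h, deg_y Q ≤ d-2 }`
is stable under all section operators `Λ_r`: if `deg_t Q < h` and
`deg_y Q ≤ d-2` (encoded as `deg_y Q < d-1`), then `Λ_r (Q(t,f)/E_y(t,f))` is
again of this form.  Here `Λ_r` are the section operators on `k((t))`,
characterized by `g = ∑_r t^r (Λ_r g)^p`. -/
theorem stability_degree_le_d_sub_two (k : Type*) [Field k] (p : ℕ) [Fact p.Prime]
    [CharP k p] [PerfectRing k p] (h d : ℕ) (hd : 1 ≤ d)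
    (E : Polynomial (Polynomial k))
    (hirr : Irreducible (E.map (algebraMap (Polynomial k) (RatFunc k))))
    (hEy : E.natDegree = d)
    (hEt : ∀ i, (E.coeff i).degree ≤ (h : WithBot ℕ))
    (f : PowerSeries k)
    (hroot : Polynomial.eval₂ (polyToSeries k) f E = 0)
    (hsimple : evalAt k f (Polynomial.derivative E) ≠ 0)
    (Λ : Fin p → LaurentSeries k → LaurentSeries k)
    (hΛ : ∀ g : LaurentSeries k, g = ∑ r : Fin p, (tL k) ^ (r : ℕ) * (Λ r g) ^ p)
    (r : Fin p)
    (Q : Polynomial (Polynomial k))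
    (hQt : ∀ i, (Q.coeff i).degree < (h : WithBot ℕ))
    (hQy : Q.degree < ((d - 1 : ℕ) : WithBot ℕ)) :
    ∃ Q' : Polynomial (Polynomial k),
      (∀ i, (Q'.coeff i).degree < (h : WithBot ℕ))
        ∧ Q'.degree < ((d - 1 : ℕ) : WithBot ℕ)
        ∧ Λ r (evalAt k f Q / evalAt k f (Polynomial.derivative E))
            = evalAt k f Q' / evalAt k f (Polynomial.derivative E) := by
  classical
  have hppos : 0 < p := (Fact.out : p.Prime).pos
  have hp2 : 2 ≤ p := (Fact.out : p.Prime).two_le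
  haveI : CharP (LaurentSeries k) p :=
    charP_of_injective_ringHom (HahnSeries.C_injective (Γ := ℤ) (R := k)) p
  -- the root inside `k((t))`
  have hαroot : (E.map (polyToLaurent k)).eval (HahnSeries.ofPowerSeries ℤ k f) = 0 := by
    have h1 := congrArg (HahnSeries.ofPowerSeries ℤ k) hroot
    rw [Polynomial.hom_eval₂, map_zero] at h1
    rw [Polynomial.eval_map]
    exact h1
  have he'bar : (Polynomial.derivative (E.map (polyToLaurent k))).eval
      (HahnSeries.ofPowerSeries ℤ k f) = evalAt k f (Polynomial.derivative E) := by
    rw [Polynomial.derivative_map, Polynomial.eval_map]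
    rfl
  set G := Q * E ^ (p - 1) with hG
  set Gd := pdigit p (p - 1) G with hGd
  -- the key identity
  have hkey : (Gd.map (polyToLaurent k)).eval ((HahnSeries.ofPowerSeries ℤ k f) ^ p)
      = evalAt k f Q * evalAt k f (Polynomial.derivative E) ^ (p - 1) := by
    have h1 := key_digit_eval (p := p) (E.map (polyToLaurent k)) (Q.map (polyToLaurent k))
      (HahnSeries.ofPowerSeries ℤ k f) hαroot
    rw [← Polynomial.map_pow, ← Polynomial.map_mul, ← hG] at h1
    rw [pdigit_map (polyToLaurent k) hppos, ← hGd] at h1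
    rw [h1, he'bar, Polynomial.eval_map]
    rfl
  set N := Gd.natDegree + 1 with hN
  set Q'f : ℕ → Polynomial (Polynomial k) :=
    fun j => mkPoly (fun m => rootDigit k p j (Gd.coeff m)) N with hQ'f
  -- expansion of the evaluated digit polynomial
  have hexp : (Gd.map (polyToLaurent k)).eval ((HahnSeries.ofPowerSeries ℤ k f) ^ p)
      = ∑ m ∈ Finset.range N, polyToLaurent k (Gd.coeff m)
          * ((HahnSeries.ofPowerSeries ℤ k f) ^ p) ^ m := by
    rw [Polynomial.eval_eq_sum_range'
      (lt_of_le_of_lt Polynomial.natDegree_map_le (by omega : Gd.natDegree < N))]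
    exact Finset.sum_congr rfl fun m _ => by rw [Polynomial.coeff_map]
  have hφX : polyToLaurent k Polynomial.X = tL k := by
    have h1 : polyToSeries k Polynomial.X = PowerSeries.X := by
      simp [polyToSeries]
    show (HahnSeries.ofPowerSeries ℤ k) (polyToSeries k Polynomial.X) = tL k
    rw [h1, HahnSeries.ofPowerSeries_X]
    rfl
  have hrec : ∀ c : Polynomial k, polyToLaurent k c
      = ∑ j ∈ Finset.range p, (tL k) ^ j * (polyToLaurent k (rootDigit k p j c)) ^ p := by
    intro c
    conv_lhs => rw [← rootDigit_reconstruct k p c]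
    rw [map_sum]
    exact Finset.sum_congr rfl fun j _ => by rw [map_mul, map_pow, map_pow, hφX]
  have hval : ∀ j : ℕ, evalAt k f (Q'f j) = ∑ m ∈ Finset.range N,
      polyToLaurent k (rootDigit k p j (Gd.coeff m)) * (HahnSeries.ofPowerSeries ℤ k f) ^ m := by
    intro j
    show Polynomial.eval₂ _ _ (mkPoly _ N) = _
    rw [mkPoly, Polynomial.eval₂_finset_sum]
    exact Finset.sum_congr rfl fun m _ => by
      rw [Polynomial.eval₂_mul, Polynomial.eval₂_C, Polynomial.eval₂_X_pow]
  -- main decomposition identity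
  have hswap : evalAt k f Q * evalAt k f (Polynomial.derivative E) ^ (p - 1)
      = ∑ j ∈ Finset.range p, (tL k) ^ j * (evalAt k f (Q'f j)) ^ p := by
    rw [← hkey, hexp]
    calc ∑ m ∈ Finset.range N, polyToLaurent k (Gd.coeff m)
          * ((HahnSeries.ofPowerSeries ℤ k f) ^ p) ^ m
        = ∑ m ∈ Finset.range N, ∑ j ∈ Finset.range p, (tL k) ^ j
            * ((polyToLaurent k (rootDigit k p j (Gd.coeff m)))
                * (HahnSeries.ofPowerSeries ℤ k f) ^ m) ^ p := by
          refine Finset.sum_congr rfl fun m _ => ?_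
          rw [hrec (Gd.coeff m), Finset.sum_mul]
          refine Finset.sum_congr rfl fun j _ => ?_
          have hpm : ((HahnSeries.ofPowerSeries ℤ k f) ^ p) ^ m
              = ((HahnSeries.ofPowerSeries ℤ k f) ^ m) ^ p := by
            rw [← pow_mul, ← pow_mul, Nat.mul_comm]
          rw [hpm, mul_pow]
          ring
      _ = ∑ j ∈ Finset.range p, ∑ m ∈ Finset.range N, (tL k) ^ j
            * ((polyToLaurent k (rootDigit k p j (Gd.coeff m)))
                * (HahnSeries.ofPowerSeries ℤ k f) ^ m) ^ p := Finset.sum_comm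
      _ = ∑ j ∈ Finset.range p, (tL k) ^ j * (evalAt k f (Q'f j)) ^ p := by
          refine Finset.sum_congr rfl fun j _ => ?_
          rw [← Finset.mul_sum, ← sum_pow_char, ← hval j]
  -- decomposition of `g = Q(f)/E_y(f)`
  have he'p : evalAt k f (Polynomial.derivative E) ^ p
      = evalAt k f (Polynomial.derivative E)
        * evalAt k f (Polynomial.derivative E) ^ (p - 1) := by
    conv_lhs => rw [show p = (p - 1) + 1 by omega]
    rw [pow_succ]
    ring
  have hgdec : evalAt k f Q / evalAt k f (Polynomial.derivative E)
      = ∑ j : Fin p, (tL k) ^ (j : ℕ)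
          * (evalAt k f (Q'f (j : ℕ)) / evalAt k f (Polynomial.derivative E)) ^ p := by
    rw [Fin.sum_univ_eq_sum_range (fun j => (tL k) ^ j
      * (evalAt k f (Q'f j) / evalAt k f (Polynomial.derivative E)) ^ p) p]
    have hstep : ∀ j ∈ Finset.range p, (tL k) ^ j
        * (evalAt k f (Q'f j) / evalAt k f (Polynomial.derivative E)) ^ p
        = ((tL k) ^ j * (evalAt k f (Q'f j)) ^ p)
            / evalAt k f (Polynomial.derivative E) ^ p := by
      intro j _
      rw [div_pow, mul_div_assoc]
    rw [Finset.sum_congr rfl hstep, ← Finset.sum_div, ← hswap, he'p,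
      mul_div_mul_right _ _ (pow_ne_zero (p - 1) hsimple)]
  -- uniqueness of the decomposition
  have hzero : ∑ j : Fin p, (tL k) ^ (j : ℕ)
      * ((Λ j (evalAt k f Q / evalAt k f (Polynomial.derivative E))
          - evalAt k f (Q'f (j : ℕ)) / evalAt k f (Polynomial.derivative E))) ^ p = 0 := by
    have h1 := hΛ (evalAt k f Q / evalAt k f (Polynomial.derivative E))
    calc ∑ j : Fin p, (tL k) ^ (j : ℕ)
        * ((Λ j (evalAt k f Q / evalAt k f (Polynomial.derivative E))
            - evalAt k f (Q'f (j : ℕ)) / evalAt k f (Polynomial.derivative E))) ^ p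
        = ∑ j : Fin p, ((tL k) ^ (j : ℕ)
            * (Λ j (evalAt k f Q / evalAt k f (Polynomial.derivative E))) ^ p
          - (tL k) ^ (j : ℕ)
            * (evalAt k f (Q'f (j : ℕ)) / evalAt k f (Polynomial.derivative E)) ^ p) := by
          refine Finset.sum_congr rfl fun j _ => ?_
          rw [sub_pow_char]
          ring
      _ = (∑ j : Fin p, (tL k) ^ (j : ℕ)
            * (Λ j (evalAt k f Q / evalAt k f (Polynomial.derivative E))) ^ p)
          - ∑ j : Fin p, (tL k) ^ (j : ℕ)
            * (evalAt k f (Q'f (j : ℕ)) / evalAt k f (Polynomial.derivative E)) ^ p :=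
          Finset.sum_sub_distrib _ _
      _ = 0 := by rw [← h1, ← hgdec, sub_self]
  have hΛr : Λ r (evalAt k f Q / evalAt k f (Polynomial.derivative E))
      = evalAt k f (Q'f (r : ℕ)) / evalAt k f (Polynomial.derivative E) :=
    sub_eq_zero.mp (lambda_unique _ hzero r)
  -- coefficient formulas
  have hrdcoeff : ∀ (j : ℕ) (c : Polynomial k) (i : ℕ), (rootDigit k p j c).coeff i
      = (frobeniusEquiv k p).symm (c.coeff (p * i + j)) := by
    intro j c i
    rw [rootDigit, Polynomial.coeff_map, coeff_pdigit hppos]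
    rfl
  have hGdcoeff : ∀ m, Gd.coeff m = G.coeff (p * m + (p - 1)) := fun m =>
    coeff_pdigit hppos _ _ _
  -- degree bound in t
  have hEpow : ∀ i, ((E ^ (p - 1)).coeff i).degree ≤ (((p - 1) * h : ℕ) : WithBot ℕ) :=
    coeff_pow_degree_le hEt (p - 1)
  have hGt : ∀ s, ((G.coeff s)).degree < ((p * h : ℕ) : WithBot ℕ) := by
    intro s
    have h1 := coeff_mul_degree_lt hQt hEpow s
    have h2 : h + (p - 1) * h = p * h := by
      have h3 : p - 1 + 1 = p := by omega
      calc h + (p - 1) * h = ((p - 1) + 1) * h := by ring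
        _ = p * h := by rw [h3]
    rwa [h2] at h1
  have hGtc : ∀ s n, p * h ≤ n → (G.coeff s).coeff n = 0 := by
    intro s n hn
    apply Polynomial.coeff_eq_zero_of_degree_lt
    refine lt_of_lt_of_le (hGt s) ?_
    simp only [Nat.cast_withBot]
    exact WithBot.coe_le_coe.mpr hn
  have hQ't : ∀ j : ℕ, j < p → ∀ i, ((Q'f j).coeff i).degree < (h : WithBot ℕ) := by
    intro j hj i
    show ((mkPoly (fun m => rootDigit k p j (Gd.coeff m)) N).coeff i).degree < _
    rw [coeff_mkPoly]
    by_cases hi : i < N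
    · rw [if_pos hi, Polynomial.degree_lt_iff_coeff_zero]
      intro i' hi'
      rw [hrdcoeff, hGdcoeff]
      have hple : p * h ≤ p * i' + j := by
        have := Nat.mul_le_mul_left p hi'
        omega
      rw [hGtc _ _ hple, map_zero]
    · rw [if_neg hi, Polynomial.degree_zero]
      simp only [Nat.cast_withBot]
      exact WithBot.bot_lt_coe h
  -- degree bound in y
  have hQ'y : ∀ j : ℕ, (Q'f j).degree < ((d - 1 : ℕ) : WithBot ℕ) := by
    intro j
    rw [Polynomial.degree_lt_iff_coeff_zero]
    intro m hm
    show (mkPoly (fun m => rootDigit k p j (Gd.coeff m)) N).coeff m = 0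
    rw [coeff_mkPoly]
    by_cases hi : m < N
    · rw [if_pos hi, hGdcoeff]
      have hGzero : G.coeff (p * m + (p - 1)) = 0 := by
        by_cases hQ0 : Q = 0
        · rw [hG, hQ0, zero_mul, Polynomial.coeff_zero]
        · have hd2 : 2 ≤ d := by
            by_contra hcon
            have hd1 : d - 1 = 0 := by omega
            rw [hd1] at hQy
            have hall := (Polynomial.degree_lt_iff_coeff_zero Q 0).mp hQy
            exact hQ0 (Polynomial.ext fun n => by simpa using hall n (Nat.zero_le n))
          have hQdeg : Q.natDegree ≤ d - 2 := by
            have := (Polynomial.natDegree_lt_iff_degree_lt hQ0).mpr hQy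
            omega
          apply Polynomial.coeff_eq_zero_of_natDegree_lt
          have hGnd : G.natDegree ≤ Q.natDegree + (p - 1) * d := by
            refine le_trans Polynomial.natDegree_mul_le ?_
            have := Polynomial.natDegree_pow_le (p := E) (n := p - 1)
            rw [hEy] at this
            omega
          have c1 : p * (d - 1) ≤ p * m := Nat.mul_le_mul_left p (by omega)
          have c2 : (p - 1) * d + d = p * d := by
            have h3 : p - 1 + 1 = p := by omega
            calc (p - 1) * d + d = ((p - 1) + 1) * d := by ring
              _ = p * d := by rw [h3]
          have c3 : p * (d - 1) + p = p * d := by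
            have h3 : d - 1 + 1 = d := by omega
            calc p * (d - 1) + p = p * ((d - 1) + 1) := by ring
              _ = p * d := by rw [h3]
          omega
      rw [hGzero, rootDigit_zero]
    · rw [if_neg hi]
  exact ⟨Q'f (r : ℕ), hQ't (r : ℕ) r.isLt, hQ'y (r : ℕ), hΛr⟩
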